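/- Let G = SU(2) with standard diagonal maximal torus T, acting on the space U_n of complex homogeneous polynomials of degree n ≥ 1 in x, y. Let W be the complex line spanned by the monomial x^i y^{n−i} (0 ≤ i ≤ n). Then the stabilizer {g ∈ G : g·W ⊆ W} of the line W equals T if 2i ≠ n, and equals the normalizer N_G(T) of T if 2i = n. -/
import Mathlib


noncomputable section

/-- Substitution action on polynomials: `X i ↦ ∑ j, A i j • X j`, i.e. precomposition of a
polynomial function with the linear map given by the matrix `A`. -/
def substAct (A : Matrix (Fin 2) (Fin 2) ℂ) (f : MvPolynomial (Fin 2) ℂ) :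
    MvPolynomial (Fin 2) ℂ :=
  MvPolynomial.aeval (fun i => ∑ j, MvPolynomial.C (A i j) * MvPolynomial.X j) f

/-- The action of an invertible matrix `g` on polynomial functions: `(g • f)(v) = f(g⁻¹ v)`. -/
def polyAct (g : Matrix (Fin 2) (Fin 2) ℂ) (f : MvPolynomial (Fin 2) ℂ) :
    MvPolynomial (Fin 2) ℂ :=
  substAct g⁻¹ f

/-- The standard diagonal maximal torus of `SU(2)`. -/
def TDiag : Set (Matrix (Fin 2) (Fin 2) ℂ) :=
  {A | A ∈ Matrix.specialUnitaryGroup (Fin 2) ℂ ∧ A 0 1 = 0 ∧ A 1 0 = 0}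

/-- The normalizer of the diagonal torus in `SU(2)`. -/
def NTDiag : Set (Matrix (Fin 2) (Fin 2) ℂ) :=
  {g | g ∈ Matrix.specialUnitaryGroup (Fin 2) ℂ ∧ ∀ t ∈ TDiag, g * t * g⁻¹ ∈ TDiag}

/-- The complex line spanned by the monomial `x^i y^(n-i)`. -/
def monLine (n i : ℕ) : Submodule ℂ (MvPolynomial (Fin 2) ℂ) :=
  Submodule.span ℂ
    {MvPolynomial.monomial (Finsupp.single 0 i + Finsupp.single 1 (n - i)) (1 : ℂ)}

open MvPolynomial Matrix


lemma su2_eqs (g : Matrix (Fin 2) (Fin 2) ℂ)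
    (hg : g ∈ Matrix.specialUnitaryGroup (Fin 2) ℂ) :
    (g 0 0 * star (g 0 0) + g 0 1 * star (g 0 1) = 1) ∧
    (g 0 0 * star (g 1 0) + g 0 1 * star (g 1 1) = 0) ∧
    (g 1 0 * star (g 1 0) + g 1 1 * star (g 1 1) = 1) ∧
    (star (g 0 0) * g 0 0 + star (g 1 0) * g 1 0 = 1) ∧
    (star (g 0 0) * g 0 1 + star (g 1 0) * g 1 1 = 0) ∧
    (star (g 0 1) * g 0 1 + star (g 1 1) * g 1 1 = 1) := by
  obtain ⟨hu, hdet⟩ := (Matrix.mem_specialUnitaryGroup_iff).mp hg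
  have h1 : g * star g = 1 := (Matrix.mem_unitaryGroup_iff).mp hu
  have h2 : star g * g = 1 := (Matrix.mem_unitaryGroup_iff').mp hu
  have e1 := congrFun (congrFun h1 0) 0
  have e2 := congrFun (congrFun h1 0) 1
  have e3 := congrFun (congrFun h1 1) 1
  have f1 := congrFun (congrFun h2 0) 0
  have f2 := congrFun (congrFun h2 0) 1
  have f3 := congrFun (congrFun h2 1) 1
  simp [Matrix.mul_apply, Fin.sum_univ_two, Matrix.one_apply, Matrix.star_apply] at e1 e2 e3 f1 f2 f3
  exact ⟨e1, e2, e3, f1, f2, f3⟩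

/-- helper: from `x * star x + y * star y = 1` and `x = 0`, get `y ≠ 0`. -/
lemma norm_ne (x y : ℂ) (h : x * star x + y * star y = 1) (hx : x = 0) : y ≠ 0 := by
  intro hy; rw [hx, hy] at h; simp at h

lemma pattern (g : Matrix (Fin 2) (Fin 2) ℂ)
    (hg : g ∈ Matrix.specialUnitaryGroup (Fin 2) ℂ)
    (h : g 0 0 = 0 ∨ g 0 1 = 0 ∨ g 1 0 = 0 ∨ g 1 1 = 0) :
    (g 0 1 = 0 ∧ g 1 0 = 0) ∨ (g 0 0 = 0 ∧ g 1 1 = 0) := by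
  obtain ⟨e1, e2, e3, f1, f2, f3⟩ := su2_eqs g hg
  rcases h with h | h | h | h
  · -- a = 0 : c ≠ 0 from f1, then f2 gives d = 0
    have hc : g 1 0 ≠ 0 := by
      intro hc
      rw [h, hc] at f1; simp at f1
    right
    refine ⟨h, ?_⟩
    rw [h] at f2; simp at f2
    rcases f2 with f2 | f2
    · exact absurd f2 hc
    · exact f2
  · -- b = 0 : a ≠ 0 from e1, then e2 gives c = 0
    have ha : g 0 0 ≠ 0 := by
      intro ha; rw [h, ha] at e1; simp at e1
    left
    refine ⟨h, ?_⟩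
    rw [h] at e2; simp at e2
    rcases e2 with e2 | e2
    · exact absurd e2 ha
    · simpa using e2
  · -- c = 0 : a ≠ 0 from f1, then f2 gives b = 0
    have ha : g 0 0 ≠ 0 := by
      intro ha; rw [h, ha] at f1; simp at f1
    left
    refine ⟨?_, h⟩
    rw [h] at f2; simp at f2
    rcases f2 with f2 | f2
    · exact absurd f2 ha
    · exact f2
  · -- d = 0 : c ≠ 0 from e3, then e2 gives a = 0
    have hc : g 1 0 ≠ 0 := by
      intro hc; rw [h, hc] at e3; simp at e3
    right
    refine ⟨?_, h⟩
    rw [h] at e2; simp at e2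
    rcases e2 with e2 | e2
    · exact e2
    · exact absurd (by simpa using e2) hc

lemma diag_ne (g : Matrix (Fin 2) (Fin 2) ℂ)
    (hg : g ∈ Matrix.specialUnitaryGroup (Fin 2) ℂ)
    (h1 : g 0 1 = 0) (h2 : g 1 0 = 0) : g 0 0 ≠ 0 ∧ g 1 1 ≠ 0 := by
  obtain ⟨e1, e2, e3, f1, f2, f3⟩ := su2_eqs g hg
  constructor
  · intro h; rw [h, h1] at e1; simp at e1
  · intro h; rw [h, h2] at e3; simp at e3

lemma antidiag_ne (g : Matrix (Fin 2) (Fin 2) ℂ)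
    (hg : g ∈ Matrix.specialUnitaryGroup (Fin 2) ℂ)
    (h1 : g 0 0 = 0) (h2 : g 1 1 = 0) : g 0 1 ≠ 0 ∧ g 1 0 ≠ 0 := by
  obtain ⟨e1, e2, e3, f1, f2, f3⟩ := su2_eqs g hg
  constructor
  · intro h; rw [h, h1] at e1; simp at e1
  · intro h; rw [h, h2] at e3; simp at e3

lemma inv_eq_adj (g : Matrix (Fin 2) (Fin 2) ℂ)
    (hdet : g.det = 1) :
    g⁻¹ = !![g 1 1, -(g 0 1); -(g 1 0), g 0 0] := by
  rw [Matrix.inv_def, hdet, Matrix.adjugate_fin_two]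
  simp




lemma mon_eq (n i : ℕ) :
    (MvPolynomial.monomial (Finsupp.single 0 i + Finsupp.single 1 (n - i)) (1 : ℂ)
      : MvPolynomial (Fin 2) ℂ) = X 0 ^ i * X 1 ^ (n - i) := by
  rw [X_pow_eq_monomial, X_pow_eq_monomial, monomial_mul, one_mul]

lemma mem_monLine_iff (n i : ℕ) (f : MvPolynomial (Fin 2) ℂ) :
    f ∈ monLine n i ↔ ∃ k : ℂ, k • ((X 0 : MvPolynomial (Fin 2) ℂ) ^ i * X 1 ^ (n - i)) = f := by
  rw [monLine, Submodule.mem_span_singleton, mon_eq]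

lemma substAct_mon (A : Matrix (Fin 2) (Fin 2) ℂ) (n i : ℕ) :
    substAct A ((X 0 : MvPolynomial (Fin 2) ℂ) ^ i * X 1 ^ (n - i)) =
      (C (A 0 0) * X 0 + C (A 0 1) * X 1) ^ i *
      (C (A 1 0) * X 0 + C (A 1 1) * X 1) ^ (n - i) := by
  simp [substAct, Fin.sum_univ_two]

lemma substAct_smul (A : Matrix (Fin 2) (Fin 2) ℂ) (k : ℂ) (f : MvPolynomial (Fin 2) ℂ) :
    substAct A (k • f) = k • substAct A f := by
  simp [substAct]

lemma eval10_zero (n i : ℕ) (h : i < n) (f : MvPolynomial (Fin 2) ℂ) (hf : f ∈ monLine n i) :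
    aeval (![1, 0] : Fin 2 → ℂ) f = 0 := by
  obtain ⟨k, hk⟩ := (mem_monLine_iff n i f).mp hf
  rw [← hk, _root_.map_smul]
  simp [zero_pow (by omega : n - i ≠ 0)]

lemma eval01_zero (n i : ℕ) (h : 0 < i) (f : MvPolynomial (Fin 2) ℂ) (hf : f ∈ monLine n i) :
    aeval (![0, 1] : Fin 2 → ℂ) f = 0 := by
  obtain ⟨k, hk⟩ := (mem_monLine_iff n i f).mp hf
  rw [← hk, _root_.map_smul]
  simp [zero_pow (by omega : i ≠ 0)]

lemma antidiag_forces (n i : ℕ) (hi : i ≤ n) (hne : 2 * i ≠ n) (b c : ℂ)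
    (hb : b ≠ 0) (hc : c ≠ 0)
    (hmem : ((C b * X 1) ^ i * (C c * X 0) ^ (n - i) : MvPolynomial (Fin 2) ℂ)
      ∈ monLine n i) : False := by
  have key : ((C b * X 1) ^ i * (C c * X 0) ^ (n - i) : MvPolynomial (Fin 2) ℂ)
      = monomial (Finsupp.single 0 (n - i) + Finsupp.single 1 i) (b ^ i * c ^ (n - i)) := by
    rw [mul_pow, mul_pow, ← C_pow, ← C_pow, X_pow_eq_monomial, X_pow_eq_monomial,
      C_mul_monomial, C_mul_monomial, monomial_mul]
    rw [add_comm (Finsupp.single 1 i), mul_one, mul_one, mul_comm]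
  obtain ⟨k, hk⟩ := (Submodule.mem_span_singleton).mp (by rw [key] at hmem; exact hmem)
  rw [MvPolynomial.smul_monomial, smul_eq_mul, mul_one] at hk
  have hcoeff := congrArg
    (MvPolynomial.coeff (Finsupp.single 0 (n - i) + Finsupp.single 1 i)) hk
  rw [MvPolynomial.coeff_monomial, MvPolynomial.coeff_monomial] at hcoeff
  have hμν : (Finsupp.single 0 i + Finsupp.single 1 (n - i) : Fin 2 →₀ ℕ)
      ≠ Finsupp.single 0 (n - i) + Finsupp.single 1 i := by
    intro h
    have := DFunLike.congr_fun h 0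
    simp [Finsupp.single_apply] at this
    omega
  rw [if_neg hμν, if_pos rfl] at hcoeff
  exact (mul_ne_zero (pow_ne_zero _ hb) (pow_ne_zero _ hc)) hcoeff.symm

lemma polyAct_mon (g : Matrix (Fin 2) (Fin 2) ℂ) (hdet : g.det = 1) (n i : ℕ) :
    polyAct g ((X 0 : MvPolynomial (Fin 2) ℂ) ^ i * X 1 ^ (n - i)) =
      (C (g 1 1) * X 0 + C (-(g 0 1)) * X 1) ^ i *
      (C (-(g 1 0)) * X 0 + C (g 0 0) * X 1) ^ (n - i) := by
  rw [polyAct, substAct_mon, inv_eq_adj g hdet]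
  simp

lemma diag_stab (n i : ℕ) (g : Matrix (Fin 2) (Fin 2) ℂ) (hdet : g.det = 1)
    (hb : g 0 1 = 0) (hc : g 1 0 = 0) :
    ∀ f ∈ monLine n i, polyAct g f ∈ monLine n i := by
  intro f hf
  obtain ⟨k, hk⟩ := (mem_monLine_iff n i f).mp hf
  rw [← hk, polyAct, substAct_smul]
  refine Submodule.smul_mem _ _ ?_
  rw [← polyAct, polyAct_mon g hdet, mem_monLine_iff]
  refine ⟨g 1 1 ^ i * g 0 0 ^ (n - i), ?_⟩
  rw [hb, hc]
  rw [smul_eq_C_mul]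
  simp only [neg_zero, C_0, zero_mul, add_zero, zero_add, mul_pow, C_pow, _root_.map_mul,
    map_neg, _root_.map_one]
  ring

lemma antidiag_stab (n i : ℕ) (h2i : 2 * i = n) (g : Matrix (Fin 2) (Fin 2) ℂ)
    (hdet : g.det = 1) (ha : g 0 0 = 0) (hd : g 1 1 = 0) :
    ∀ f ∈ monLine n i, polyAct g f ∈ monLine n i := by
  have hni : n - i = i := by omega
  intro f hf
  obtain ⟨k, hk⟩ := (mem_monLine_iff n i f).mp hf
  rw [← hk, polyAct, substAct_smul]
  refine Submodule.smul_mem _ _ ?_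
  rw [← polyAct, polyAct_mon g hdet, mem_monLine_iff]
  refine ⟨(-(g 0 1)) ^ i * (-(g 1 0)) ^ (n - i), ?_⟩
  rw [ha, hd, hni]
  rw [smul_eq_C_mul]
  simp only [neg_zero, C_0, zero_mul, add_zero, zero_add, mul_pow, C_pow, _root_.map_mul,
    map_neg, _root_.map_one]
  ring

lemma stab_classify (n i : ℕ) (hn : 1 ≤ n) (hi : i ≤ n) (g : Matrix (Fin 2) (Fin 2) ℂ)
    (hg : g ∈ Matrix.specialUnitaryGroup (Fin 2) ℂ)
    (hstab : ∀ f ∈ monLine n i, polyAct g f ∈ monLine n i) :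
    (g 0 1 = 0 ∧ g 1 0 = 0) ∨ ((g 0 0 = 0 ∧ g 1 1 = 0) ∧ 2 * i = n) := by
  have hdet : g.det = 1 := ((Matrix.mem_specialUnitaryGroup_iff).mp hg).2
  have hmon : ((X 0 : MvPolynomial (Fin 2) ℂ) ^ i * X 1 ^ (n - i)) ∈ monLine n i := by
    rw [mem_monLine_iff]; exact ⟨1, one_smul _ _⟩
  have hP := hstab _ hmon
  rw [polyAct_mon g hdet] at hP
  have h10 : i < n → g 1 1 ^ i * (-(g 1 0)) ^ (n - i) = 0 := by
    intro hlt
    have h := eval10_zero n i hlt _ hP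
    simpa using h
  have h01 : 0 < i → (-(g 0 1)) ^ i * g 0 0 ^ (n - i) = 0 := by
    intro hpos
    have h := eval01_zero n i hpos _ hP
    simpa using h
  rcases Nat.eq_zero_or_pos i with hi0 | hipos
  · -- i = 0 : c = 0, hence diagonal
    have h := h10 (by omega)
    rw [hi0] at h
    simp only [pow_zero, one_mul, Nat.sub_zero] at h
    have hc : g 1 0 = 0 := by
      have := pow_eq_zero_iff (by omega : n ≠ 0) |>.mp h
      simpa using this
    rcases pattern g hg (Or.inr (Or.inr (Or.inl hc))) with hD | hA
    · exact Or.inl hD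
    · exact absurd hc (antidiag_ne g hg hA.1 hA.2).2
  rcases eq_or_lt_of_le hi with hin | hlt
  · -- i = n : b = 0, hence diagonal
    have h := h01 hipos
    rw [hin] at h
    simp only [Nat.sub_self, pow_zero, mul_one] at h
    have hb : g 0 1 = 0 := by
      have := pow_eq_zero_iff (by omega : n ≠ 0) |>.mp h
      simpa using this
    rcases pattern g hg (Or.inr (Or.inl hb)) with hD | hA
    · exact Or.inl hD
    · exact absurd hb (antidiag_ne g hg hA.1 hA.2).1
  · -- 0 < i < n
    have h := h10 hlt
    rcases mul_eq_zero.mp h with h | h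
    · -- d = 0
      have hd : g 1 1 = 0 := pow_eq_zero_iff (by omega : i ≠ 0) |>.mp h
      rcases pattern g hg (Or.inr (Or.inr (Or.inr hd))) with hD | hA
      · exact Or.inl hD
      · by_cases h2 : 2 * i = n
        · exact Or.inr ⟨hA, h2⟩
        · exfalso
          obtain ⟨hbne, hcne⟩ := antidiag_ne g hg hA.1 hA.2
          rw [hA.1, hA.2] at hP
          simp only [map_zero, zero_mul, zero_add, add_zero] at hP
          exact antidiag_forces n i hi h2 _ _ (neg_ne_zero.mpr hbne)
            (neg_ne_zero.mpr hcne) hP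
    · -- c = 0
      have hc : g 1 0 = 0 := by
        have := pow_eq_zero_iff (by omega : n - i ≠ 0) |>.mp h
        simpa using this
      rcases pattern g hg (Or.inr (Or.inr (Or.inl hc))) with hD | hA
      · exact Or.inl hD
      · exact absurd hc (antidiag_ne g hg hA.1 hA.2).2



lemma su2_inv_mem (g : Matrix (Fin 2) (Fin 2) ℂ)
    (hg : g ∈ Matrix.specialUnitaryGroup (Fin 2) ℂ) :
    g⁻¹ ∈ Matrix.specialUnitaryGroup (Fin 2) ℂ := by
  obtain ⟨hu, hdet⟩ := (Matrix.mem_specialUnitaryGroup_iff).mp hg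
  have h2 : star g * g = 1 := (Matrix.mem_unitaryGroup_iff').mp hu
  have hinv : g⁻¹ = star g := Matrix.inv_eq_left_inv h2
  rw [Matrix.mem_specialUnitaryGroup_iff, hinv]
  constructor
  · exact Unitary.star_mem hu
  · rw [Matrix.star_eq_conjTranspose, Matrix.det_conjTranspose, hdet]
    simp

lemma t0_mem : (!![Complex.I, 0; 0, -Complex.I] : Matrix (Fin 2) (Fin 2) ℂ) ∈ TDiag := by
  refine ⟨?_, by simp, by simp⟩
  rw [Matrix.mem_specialUnitaryGroup_iff]
  constructor
  · rw [Matrix.mem_unitaryGroup_iff]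
    ext i j
    fin_cases i <;> fin_cases j <;>
      simp [Matrix.mul_apply, Fin.sum_univ_two, Matrix.star_apply, Matrix.one_apply,
        Complex.ext_iff]
  · simp [Matrix.det_fin_two_of, Complex.I_mul_I]

lemma ntdiag_iff (g : Matrix (Fin 2) (Fin 2) ℂ) :
    g ∈ NTDiag ↔ g ∈ Matrix.specialUnitaryGroup (Fin 2) ℂ ∧
      ((g 0 1 = 0 ∧ g 1 0 = 0) ∨ (g 0 0 = 0 ∧ g 1 1 = 0)) := by
  constructor
  · rintro ⟨hg, hnorm⟩
    refine ⟨hg, ?_⟩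
    have hdet : g.det = 1 := ((Matrix.mem_specialUnitaryGroup_iff).mp hg).2
    have ht := hnorm _ t0_mem
    obtain ⟨-, h01, -⟩ := ht
    rw [inv_eq_adj g hdet] at h01
    simp [Matrix.mul_apply, Fin.sum_univ_two] at h01
    -- h01 should reduce to something implying g 0 0 * g 0 1 = 0
    have hab : g 0 0 = 0 ∨ g 0 1 = 0 := by
      have h2 : g 0 0 * g 0 1 * (-2 * Complex.I) = 0 := by
        rw [← h01]; ring
      rcases mul_eq_zero.mp h2 with h | h
      · exact mul_eq_zero.mp h
      · exfalso; simp [Complex.ext_iff] at h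
    rcases hab with h | h
    · exact pattern g hg (Or.inl h)
    · exact pattern g hg (Or.inr (Or.inl h))
  · rintro ⟨hg, hcase⟩
    have hdet : g.det = 1 := ((Matrix.mem_specialUnitaryGroup_iff).mp hg).2
    refine ⟨hg, ?_⟩
    rintro t ⟨ht, ht01, ht10⟩
    have hmem : g * t * g⁻¹ ∈ Matrix.specialUnitaryGroup (Fin 2) ℂ :=
      mul_mem (mul_mem hg ht) (su2_inv_mem g hg)
    refine ⟨hmem, ?_, ?_⟩ <;>
    · rw [inv_eq_adj g hdet]
      rcases hcase with ⟨h1, h2⟩ | ⟨h1, h2⟩ <;>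
        simp [Matrix.mul_apply, Fin.sum_univ_two, h1, h2, ht01, ht10]

/-- For `SU(2)` acting on complex homogeneous polynomials of degree
`n ≥ 1`, the stabilizer of the line `W = ℂ · x^i y^(n-i)` (`0 ≤ i ≤ n`) equals the diagonal
torus `T` when `2i ≠ n`, and equals the normalizer `N(T)` when `2i = n`. -/
theorem stabilizer_of_monomial_line (n i : ℕ) (hn : 1 ≤ n) (hi : i ≤ n) :
    (2 * i ≠ n →
      {g | g ∈ Matrix.specialUnitaryGroup (Fin 2) ℂ ∧
          ∀ f ∈ monLine n i, polyAct g f ∈ monLine n i} = TDiag) ∧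
    (2 * i = n →
      {g | g ∈ Matrix.specialUnitaryGroup (Fin 2) ℂ ∧
          ∀ f ∈ monLine n i, polyAct g f ∈ monLine n i} = NTDiag) := by
  constructor
  · intro h2i
    ext g
    simp only [Set.mem_setOf_eq]
    constructor
    · rintro ⟨hg, hstab⟩
      rcases stab_classify n i hn hi g hg hstab with hD | ⟨hA, h⟩
      · exact ⟨hg, hD.1, hD.2⟩
      · exact absurd h h2i
    · rintro ⟨hg, hb, hc⟩
      exact ⟨hg, diag_stab n i g ((Matrix.mem_specialUnitaryGroup_iff).mp hg).2 hb hc⟩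
  · intro h2i
    ext g
    simp only [Set.mem_setOf_eq]
    constructor
    · rintro ⟨hg, hstab⟩
      rw [ntdiag_iff]
      refine ⟨hg, ?_⟩
      rcases stab_classify n i hn hi g hg hstab with hD | ⟨hA, -⟩
      · exact Or.inl hD
      · exact Or.inr hA
    · intro hN
      rcases (ntdiag_iff g).mp hN with ⟨hg, hD | hA⟩
      · exact ⟨hg, diag_stab n i g ((Matrix.mem_specialUnitaryGroup_iff).mp hg).2 hD.1 hD.2⟩
      · exact ⟨hg, antidiag_stab n i h2i g
          ((Matrix.mem_specialUnitaryGroup_iff).mp hg).2 hA.1 hA.2⟩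

end
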